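/- Subadditivity together with invariance under local unitaries gives the one-round QPIR communication bound: if ρ* is a state on A ⊗ T that is an equal mixture of d pairwise orthogonal states, then log|A| + log|T| ≥ H(ρ*) ≥ log d. -/

import Mathlib

open Matrix
open scoped ComplexOrder

namespace QPIRaux

variable {n : Type*} [Fintype n] [DecidableEq n]

lemma trace_eq_sum_eig {A : Matrix n n ℂ} (hA : A.IsHermitian) :
    A.trace = ∑ i, (hA.eigenvalues i : ℂ) := by
  have hU : star (hA.eigenvectorUnitary : Matrix n n ℂ) * (hA.eigenvectorUnitary : Matrix n n ℂ) = 1 :=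
    Matrix.mem_unitaryGroup_iff'.mp hA.eigenvectorUnitary.2
  conv_lhs => rw [hA.spectral_theorem]
  rw [Unitary.conjStarAlgAut_apply, Matrix.trace_mul_comm, ← mul_assoc, hU, one_mul, Matrix.trace_diagonal]
  rfl

lemma trace_sq_eq_sum_sq {A : Matrix n n ℂ} (hA : A.IsHermitian) :
    (A * A).trace = ∑ i, (hA.eigenvalues i : ℂ) ^ 2 := by
  have hU : star (hA.eigenvectorUnitary : Matrix n n ℂ) * (hA.eigenvectorUnitary : Matrix n n ℂ) = 1 :=
    Matrix.mem_unitaryGroup_iff'.mp hA.eigenvectorUnitary.2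
  set U : Matrix n n ℂ := (hA.eigenvectorUnitary : Matrix n n ℂ)
  set D : Matrix n n ℂ := diagonal (RCLike.ofReal ∘ hA.eigenvalues)
  have h1 : A * A = U * (D * D) * star U := by
    conv_lhs => rw [hA.spectral_theorem]
    calc U * D * star U * (U * D * star U)
        = U * D * (star U * U) * D * star U := by simp only [mul_assoc]
      _ = U * (D * D) * star U := by rw [hU, mul_one]; simp only [mul_assoc]
  rw [h1, Matrix.trace_mul_comm, ← mul_assoc, hU, one_mul]
  simp [D, diagonal_mul_diagonal, Matrix.trace_diagonal, sq]

/-- sum of squared eigenvalues of a PSD trace-one matrix is at most 1. -/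
lemma trace_sq_le_one {A : Matrix n n ℂ} (hA : A.PosSemidef) (htr : A.trace = 1) :
    ∃ Tq : ℝ, (A * A).trace = (Tq : ℂ) ∧ 0 ≤ Tq ∧ Tq ≤ 1 := by
  refine ⟨∑ i, (hA.1.eigenvalues i) ^ 2, ?_, ?_, ?_⟩
  · rw [trace_sq_eq_sum_sq hA.1]; push_cast; ring
  · positivity
  · have hsum : ∑ i, hA.1.eigenvalues i = 1 := by
      have := trace_eq_sum_eig hA.1
      rw [htr] at this
      exact_mod_cast this.symm
    calc ∑ i, (hA.1.eigenvalues i) ^ 2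
        ≤ (∑ i, hA.1.eigenvalues i) ^ 2 :=
          Finset.sum_sq_le_sq_sum_of_nonneg (fun i _ => hA.eigenvalues_nonneg i)
      _ = 1 := by rw [hsum]; norm_num

end QPIRaux

/-- von Neumann entropy of a (Hermitian) matrix, via its eigenvalues. -/
noncomputable def vNEntropy {n : Type*} [Fintype n] [DecidableEq n]
    (ρ : Matrix n n ℂ) : ℝ :=
  if h : ρ.IsHermitian then ∑ i, Real.negMulLog (h.eigenvalues i) else 0

/-- Entropic core of the one-round QPIR lower bound: if `ρ*` on `A ⊗ T` is an equal
mixture of `d` pairwise orthogonal states, then `log|A| + log|T| ≥ H(ρ*) ≥ log d`. -/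
theorem one_round_qpir_entropy_bound {A T : Type*}
    [Fintype A] [Fintype T] [DecidableEq A] [DecidableEq T]
    {d : ℕ} (hd : 0 < d)
    (ρ : Fin d → Matrix (A × T) (A × T) ℂ)
    (hpos : ∀ s, (ρ s).PosSemidef) (htr : ∀ s, (ρ s).trace = 1)
    (horth : ∀ s t, s ≠ t → (ρ s * ρ t).trace = 0) :
    Real.log (Fintype.card A) + Real.log (Fintype.card T)
        ≥ vNEntropy ((d : ℂ)⁻¹ • ∑ s, ρ s) ∧
      vNEntropy ((d : ℂ)⁻¹ • ∑ s, ρ s) ≥ Real.log d := by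
  classical
  have hdR : (0:ℝ) < (d:ℝ) := by exact_mod_cast hd
  have hdC : ((d : ℂ)) ≠ 0 := Nat.cast_ne_zero.mpr hd.ne'
  have hcinv : (d : ℂ)⁻¹ = (((d : ℝ)⁻¹ : ℝ) : ℂ) := by push_cast; ring
  set σ : Matrix (A × T) (A × T) ℂ := (d : ℂ)⁻¹ • ∑ s, ρ s with hσdef
  have hcnn : (0:ℂ) ≤ (d:ℂ)⁻¹ := by
    rw [hcinv]; exact_mod_cast (by positivity : (0:ℝ) ≤ (d:ℝ)⁻¹)
  have hsum : (∑ s, ρ s).PosSemidef :=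
    Finset.sum_induction ρ _ (fun a b ha hb => ha.add hb)
      ⟨Matrix.isHermitian_zero, fun x => by simp⟩ (fun s _ => hpos s)
  have hσpsd : σ.PosSemidef := by
    refine ⟨?_, fun x => ?_⟩
    · unfold Matrix.IsHermitian
      rw [hσdef, Matrix.conjTranspose_smul, hsum.1.eq]
      congr 1
      rw [hcinv]
      exact Complex.conj_ofReal _
    · have h := hsum.2 x
      rw [hσdef]
      have : (x.sum fun i xi => x.sum fun j xj => star xi * (((d:ℂ)⁻¹ • ∑ s, ρ s) i j) * xj) =
          (d:ℂ)⁻¹ * (x.sum fun i xi => x.sum fun j xj => star xi * (∑ s, ρ s) i j * xj) := by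
        simp only [Finsupp.sum, Finset.mul_sum, Matrix.smul_apply, smul_eq_mul]
        exact Finset.sum_congr rfl fun i _ => Finset.sum_congr rfl fun j _ => by ring
      rw [this]
      exact mul_nonneg hcnn h
  set q : (A × T) → ℝ := hσpsd.1.eigenvalues with hq
  have hq0 : ∀ i, 0 ≤ q i := fun i => hσpsd.eigenvalues_nonneg i
  have htrσ : σ.trace = 1 := by
    rw [hσdef, Matrix.trace_smul, Matrix.trace_sum]
    simp only [htr, Finset.sum_const, Finset.card_univ, Fintype.card_fin, nsmul_eq_mul,
      mul_one, smul_eq_mul]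
    exact inv_mul_cancel₀ hdC
  have hq1 : ∑ i, q i = 1 := by
    have := QPIRaux.trace_eq_sum_eig hσpsd.1
    rw [htrσ] at this
    exact_mod_cast this.symm
  -- sum of squares bound
  have hqsq : ∑ i, (q i) ^ 2 ≤ (d:ℝ)⁻¹ := by
    choose Tq hTq hTq0 hTq1 using fun s => QPIRaux.trace_sq_le_one (hpos s) (htr s)
    have htrace2 : (σ * σ).trace = ((d:ℂ)⁻¹ * (d:ℂ)⁻¹) * ∑ s, (Tq s : ℂ) := by
      have : σ * σ = (d:ℂ)⁻¹ • ((d:ℂ)⁻¹ • ((∑ s, ρ s) * (∑ s, ρ s))) := by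
        rw [hσdef, Matrix.smul_mul, Matrix.mul_smul]
      calc (σ * σ).trace = (d:ℂ)⁻¹ * ((d:ℂ)⁻¹ * ((∑ s, ρ s) * ∑ s, ρ s).trace) := by
            rw [this, Matrix.trace_smul, Matrix.trace_smul, smul_eq_mul, smul_eq_mul]
        _ = ((d:ℂ)⁻¹ * (d:ℂ)⁻¹) * ∑ s, (Tq s : ℂ) := by
            rw [Finset.sum_mul_sum, Matrix.trace_sum, mul_assoc]
            congr 1
            congr 1
            refine Finset.sum_congr rfl (fun s _ => ?_)
            rw [Matrix.trace_sum,
              Finset.sum_eq_single s (fun t _ hts => horth s t (Ne.symm hts)) (by simp)]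
            exact hTq s
    have hreal : ∑ i, (q i) ^ 2 = (d:ℝ)⁻¹ * (d:ℝ)⁻¹ * ∑ s, Tq s := by
      have h1 : (σ * σ).trace = ((∑ i, (q i) ^ 2 : ℝ) : ℂ) := by
        rw [QPIRaux.trace_sq_eq_sum_sq hσpsd.1]; push_cast; rfl
      have h2 : (((d:ℝ)⁻¹ * (d:ℝ)⁻¹ * ∑ s, Tq s : ℝ) : ℂ) = ((d:ℂ)⁻¹ * (d:ℂ)⁻¹) * ∑ s, (Tq s : ℂ) := by
        push_cast; ring
      have := h1.symm.trans (htrace2.trans h2.symm)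
      exact_mod_cast this
    rw [hreal]
    calc (d:ℝ)⁻¹ * (d:ℝ)⁻¹ * ∑ s, Tq s
        ≤ (d:ℝ)⁻¹ * (d:ℝ)⁻¹ * ∑ s : Fin d, (1:ℝ) := by
          refine mul_le_mul_of_nonneg_left (Finset.sum_le_sum fun s _ => hTq1 s) (by positivity)
      _ = (d:ℝ)⁻¹ := by
          simp only [Finset.sum_const, Finset.card_univ, Fintype.card_fin, smul_eq_mul, nsmul_eq_mul, mul_one]
          field_simp
  -- unfold entropy
  have hvN : vNEntropy σ = ∑ i, Real.negMulLog (q i) := by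
    rw [vNEntropy, dif_pos hσpsd.1]
  -- nonempty index type
  have hne : Nonempty (A × T) := by
    by_contra h
    rw [not_nonempty_iff] at h
    rw [Finset.univ_eq_empty, Finset.sum_empty] at hq1
    norm_num at hq1
  have hNpos : 0 < Fintype.card (A × T) := Fintype.card_pos
  constructor
  · -- upper bound
    set N : ℕ := Fintype.card (A × T) with hN
    have hNR : (0:ℝ) < (N:ℝ) := by exact_mod_cast hNpos
    have hJ := Real.concaveOn_negMulLog.le_map_sum (t := Finset.univ)
      (w := fun _ : A × T => (N:ℝ)⁻¹) (p := q)
      (fun i _ => by positivity)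
      (by rw [Finset.sum_const, Finset.card_univ, nsmul_eq_mul, ← hN]; field_simp)
      (fun i _ => hq0 i)
    simp only [smul_eq_mul, ← Finset.mul_sum, hq1, mul_one] at hJ
    have hH : (N:ℝ)⁻¹ * ∑ i, Real.negMulLog (q i) ≤ (N:ℝ)⁻¹ * Real.log N := by
      calc (N:ℝ)⁻¹ * ∑ i, Real.negMulLog (q i) ≤ Real.negMulLog ((N:ℝ)⁻¹) := hJ
        _ = (N:ℝ)⁻¹ * Real.log N := by
            rw [Real.negMulLog, Real.log_inv]; ring
    have hle : ∑ i, Real.negMulLog (q i) ≤ Real.log N :=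
      le_of_mul_le_mul_left (by simpa [mul_comm] using hH) (by positivity : (0:ℝ) < (N:ℝ)⁻¹)
    have hlog : Real.log (N:ℝ) = Real.log (Fintype.card A) + Real.log (Fintype.card T) := by
      have hA0 : (Fintype.card A : ℝ) ≠ 0 := by
        have : 0 < Fintype.card A := Fintype.card_pos_iff.mpr ⟨hne.some.1⟩
        exact_mod_cast this.ne'
      have hT0 : (Fintype.card T : ℝ) ≠ 0 := by
        have : 0 < Fintype.card T := Fintype.card_pos_iff.mpr ⟨hne.some.2⟩
        exact_mod_cast this.ne'
      rw [hN, Fintype.card_prod]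
      push_cast
      exact Real.log_mul hA0 hT0
    rw [hvN]
    rw [hlog] at hle
    exact hle
  · -- lower bound
    set S : ℝ := ∑ i, (q i) ^ 2 with hS
    have hSpos : 0 < S := by
      obtain ⟨i, hi⟩ : ∃ i, q i ≠ 0 := by
        by_contra h
        push_neg at h
        simp [h] at hq1
      have h2 : 0 < (q i) ^ 2 := by positivity
      have h3 : (q i) ^ 2 ≤ ∑ j, (q j) ^ 2 :=
        Finset.single_le_sum (f := fun j => (q j) ^ 2) (fun j _ => by positivity)
          (Finset.mem_univ i)
      exact h2.trans_le h3
    set t : Finset (A × T) := Finset.univ.filter (fun i => 0 < q i) with ht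
    have hmemt : ∀ i, i ∈ t ↔ 0 < q i := by
      intro i; simp [ht]
    have hwsum : ∑ i ∈ t, q i = 1 := by
      rw [ht, Finset.sum_filter_of_ne (fun i _ hne => lt_of_le_of_ne (hq0 i) (Ne.symm hne)), hq1]
    have hJ := (strictConcaveOn_log_Ioi.concaveOn).le_map_sum (t := t) (w := q) (p := q)
      (fun i _ => hq0 i) hwsum (fun i hi => (hmemt i).mp hi)
    have key2 : ∀ i : A × T, (q i) ^ 2 ≠ 0 → 0 < q i := by
      intro i hne
      rcases (hq0 i).lt_or_eq with h | h
      · exact h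
      · exact absurd (by rw [h.symm]; ring) hne
    have hsq_t : ∑ i ∈ t, q i • q i = S := by
      rw [hS, ht, ← Finset.sum_filter_of_ne (s := Finset.univ)
        (f := fun i => (q i)^2) (p := fun i => 0 < q i) (fun i _ hne => key2 i hne)]
      refine Finset.sum_congr rfl (fun i _ => ?_)
      rw [smul_eq_mul, sq]
    rw [hsq_t] at hJ
    have hlogS : Real.log S ≤ Real.log ((d:ℝ)⁻¹) := Real.log_le_log hSpos hqsq
    have hmain : ∑ i ∈ t, q i * Real.log (q i) ≤ -Real.log d := by
      calc ∑ i ∈ t, q i * Real.log (q i) = ∑ i ∈ t, q i • Real.log (q i) := rfl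
        _ ≤ Real.log S := hJ
        _ ≤ Real.log ((d:ℝ)⁻¹) := hlogS
        _ = -Real.log d := Real.log_inv _
    have key3 : ∀ i : A × T, q i * Real.log (q i) ≠ 0 → 0 < q i := by
      intro i hne
      rcases (hq0 i).lt_or_eq with h | h
      · exact h
      · exact absurd (by rw [h.symm]; ring) hne
    have hfull : ∑ i, q i * Real.log (q i) = ∑ i ∈ t, q i * Real.log (q i) := by
      rw [ht, Finset.sum_filter_of_ne (fun i _ hne => key3 i hne)]
    rw [hvN]
    have : ∑ i, Real.negMulLog (q i) = -∑ i, q i * Real.log (q i) := by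
      simp [Real.negMulLog, Finset.sum_neg_distrib]
    rw [this, hfull]
    linarith [hmain]
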